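/- Let C > 0, δ > 0, ε > 0 and α ∈ (0, 1) with C² √α ≤ δ/2. Let x̄, ȳ ∈ ℝ^N satisfy |x̄| ≤ C/√α, |ȳ| ≤ C/√α, |x̄ − ȳ| ≤ C and |x̄ − ȳ|² / ε² ≥ δ. Then every x ∈ ℝ^N with |x − ȳ|² ≥ (1/2)( |x̄|² + |ȳ|² ) + |x̄ − ȳ|² / (2 α ε²) satisfies |x| ≥ (1/√α) ( −C + √( C² + δ/2 − C² √α ) ). In particular this lower bound tends to +∞ as α → 0. -/

import Mathlib

set_option maxHeartbeats 1600000 in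
/-- Quantitative localization: under `C, δ, ε > 0`, `α ∈ (0,1)` with
`C²√α ≤ δ/2`, if `|xb|, |yb| ≤ C/√α`, `|xb − yb| ≤ C` and `|xb − yb|²/ε² ≥ δ`, then any
`x` with `|x − yb|² ≥ (1/2)(|xb|² + |yb|²) + |xb − yb|²/(2αε²)` satisfies
`|x| ≥ (1/√α)(−C + √(C² + δ/2 − C²√α))`; and this lower bound tends to `+∞` as
`α → 0⁺`. -/
theorem stmt_11 (N : ℕ) (hN : 1 ≤ N)
    (C δ ε α : ℝ) (hC : 0 < C) (hδ : 0 < δ) (hε : 0 < ε)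
    (hα : 0 < α) (hα1 : α < 1) (hCα : C ^ 2 * Real.sqrt α ≤ δ / 2)
    (xb yb : EuclideanSpace ℝ (Fin N))
    (hxb : ‖xb‖ ≤ C / Real.sqrt α) (hyb : ‖yb‖ ≤ C / Real.sqrt α)
    (hxy : ‖xb - yb‖ ≤ C) (hlow : δ ≤ ‖xb - yb‖ ^ 2 / ε ^ 2) :
    (∀ x : EuclideanSpace ℝ (Fin N),
      (1 / 2) * (‖xb‖ ^ 2 + ‖yb‖ ^ 2) + ‖xb - yb‖ ^ 2 / (2 * α * ε ^ 2) ≤ ‖x - yb‖ ^ 2 →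
      (1 / Real.sqrt α) * (-C + Real.sqrt (C ^ 2 + δ / 2 - C ^ 2 * Real.sqrt α)) ≤ ‖x‖) ∧
    Filter.Tendsto
      (fun a : ℝ =>
        (1 / Real.sqrt a) * (-C + Real.sqrt (C ^ 2 + δ / 2 - C ^ 2 * Real.sqrt a)))
      (nhdsWithin 0 (Set.Ioi 0)) Filter.atTop := by
  constructor
  · intro x hx
    set s := Real.sqrt α with hsdef
    have hs : 0 < s := Real.sqrt_pos.2 hα
    have hsq : s ^ 2 = α := Real.sq_sqrt hα.le
    set X := ‖xb‖ with hX
    set Y := ‖yb‖ with hY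
    have hXnn : 0 ≤ X := norm_nonneg _
    have hYnn : 0 ≤ Y := norm_nonneg _
    have hxnn : 0 ≤ ‖x‖ := norm_nonneg _
    have hYs : s * Y ≤ C := by
      rw [le_div_iff₀ hs] at hyb; linarith [hyb]
    have hXs : s * X ≤ C := by
      rw [le_div_iff₀ hs] at hxb; linarith [hxb]
    have hdiffYX : Y - X ≤ C := by
      have := abs_norm_sub_norm_le yb xb
      rw [norm_sub_rev] at this
      have := (abs_le.1 this).2
      linarith
    have hd : α * (Y ^ 2 - X ^ 2) ≤ 2 * C ^ 2 * s := by
      rcases le_or_gt Y X with h | h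
      · nlinarith [mul_nonneg (sub_nonneg.2 h) (by linarith : (0:ℝ) ≤ X + Y),
          mul_pos (mul_pos (by norm_num : (0:ℝ) < 2) (pow_pos hC 2)) hs]
      · nlinarith [mul_le_mul hdiffYX (by linarith [hXs, hYs] : s * (X + Y) ≤ 2 * C)
          (by positivity) (by linarith : (0:ℝ) ≤ C)]
    have hQ : δ * ε ^ 2 ≤ ‖xb - yb‖ ^ 2 := by
      rw [le_div_iff₀ (by positivity)] at hlow; linarith
    have hR : (1 / 2) * (X ^ 2 + Y ^ 2) + δ / (2 * α) ≤ ‖x - yb‖ ^ 2 := by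
      have h1 : δ / (2 * α) ≤ ‖xb - yb‖ ^ 2 / (2 * α * ε ^ 2) := by
        rw [div_le_div_iff₀ (by positivity) (by positivity)]
        have h2 := mul_le_mul_of_nonneg_left hQ (show (0:ℝ) ≤ 2 * α by positivity)
        linarith
      linarith
    have hRle : ‖x - yb‖ ≤ ‖x‖ + Y := norm_sub_le x yb
    have hRsq : ‖x - yb‖ ^ 2 ≤ (‖x‖ + Y) ^ 2 :=
      pow_le_pow_left₀ (norm_nonneg _) hRle 2
    have hR2 : α * (X ^ 2 + Y ^ 2) / 2 + δ / 2 ≤ α * (‖x‖ + Y) ^ 2 := by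
      have h5 := mul_le_mul_of_nonneg_left (le_trans hR hRsq) hα.le
      have hdiv : α * (δ / (2 * α)) = δ / 2 := by field_simp
      rw [mul_add, hdiv] at h5
      linarith
    rw [← hsq] at hR2 hd
    have hint1 : 0 ≤ (C - s * Y) * (s * ‖x‖) :=
      mul_nonneg (by linarith) (mul_nonneg hs.le hxnn)
    have key : C ^ 2 + δ / 2 - C ^ 2 * s ≤ (s * ‖x‖ + C) ^ 2 := by
      nlinarith [hint1, hR2, hd]
    rw [one_div, inv_mul_le_iff₀ hs]
    have h1 : Real.sqrt (C ^ 2 + δ / 2 - C ^ 2 * s) ≤ s * ‖x‖ + C := by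
      calc Real.sqrt (C ^ 2 + δ / 2 - C ^ 2 * s) ≤ Real.sqrt ((s * ‖x‖ + C) ^ 2) :=
            Real.sqrt_le_sqrt key
        _ = s * ‖x‖ + C := Real.sqrt_sq (by positivity)
    linarith
  · have hL : 0 < -C + Real.sqrt (C ^ 2 + δ / 2) := by
      have : C < Real.sqrt (C ^ 2 + δ / 2) :=
        (Real.lt_sqrt hC.le).2 (by linarith)
      linarith
    have h1 : Filter.Tendsto (fun a : ℝ => 1 / Real.sqrt a)
        (nhdsWithin 0 (Set.Ioi 0)) Filter.atTop := by
      simp only [one_div]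
      apply Filter.Tendsto.inv_tendsto_nhdsGT_zero
      rw [tendsto_nhdsWithin_iff]
      constructor
      · have h3 := (Real.continuous_sqrt.tendsto 0).mono_left
          (nhdsWithin_le_nhds (s := Set.Ioi (0:ℝ)))
        simpa using h3
      · filter_upwards [self_mem_nhdsWithin] with a ha
        exact Real.sqrt_pos.2 ha
    have h2 : Filter.Tendsto
        (fun a : ℝ => -C + Real.sqrt (C ^ 2 + δ / 2 - C ^ 2 * Real.sqrt a))
        (nhdsWithin 0 (Set.Ioi 0)) (nhds (-C + Real.sqrt (C ^ 2 + δ / 2))) := by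
      have hcont : Continuous (fun a : ℝ =>
          -C + Real.sqrt (C ^ 2 + δ / 2 - C ^ 2 * Real.sqrt a)) := by
        continuity
      have h4 := (hcont.tendsto 0).mono_left (nhdsWithin_le_nhds (s := Set.Ioi (0:ℝ)))
      simpa using h4
    exact Filter.Tendsto.atTop_mul_pos hL h1 h2
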